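/- If μ₁ and μ₂ are both eigenvalues of a 2n×2n setting via the matrix Q(λ), then the 2n×2n block matrix F[Q(μ₁,μ₂);γ] = [[Q(μ₁), 0], [γ·(Q(μ₁)−Q(μ₂))/(μ₁−μ₂), Q(μ₂)]] has rank at most 2n−2; equivalently its two smallest singular values satisfy s_{2n−1}(F[Q(μ₁,μ₂);γ]) = s_{2n}(F[Q(μ₁,μ₂);γ]) = 0. -/

import Mathlib

open Matrix BigOperators

noncomputable def sval {N : ℕ} (A : Matrix (Fin N) (Fin N) ℂ) (k : Fin N) : ℝ :=
  Real.sqrt (((Matrix.isHermitian_conjTranspose_mul_self A).eigenvalues ∘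
    Tuple.sort (Matrix.isHermitian_conjTranspose_mul_self A).eigenvalues) k.rev)

noncomputable def specNorm {𝕜 : Type*} [RCLike 𝕜] {m n : ℕ} (A : Matrix (Fin m) (Fin n) 𝕜) : ℝ :=
  ‖LinearMap.toContinuousLinearMap (Matrix.toEuclideanLin A)‖

noncomputable def Fblk {n : ℕ} (A B C : Matrix (Fin n) (Fin n) ℂ) (γ : ℂ) :
    Matrix (Fin (n + n)) (Fin (n + n)) ℂ :=
  Matrix.reindex finSumFinEquiv finSumFinEquiv (Matrix.fromBlocks A 0 (γ • C) B)

noncomputable def evalMP {n m : ℕ} (A : Fin (m + 1) → Matrix (Fin n) (Fin n) ℂ) (lam : ℂ) :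
    Matrix (Fin n) (Fin n) ℂ :=
  ∑ j : Fin (m + 1), lam ^ (j : ℕ) • A j

def colPair {n : ℕ} (a b : Fin n → ℂ) : Matrix (Fin n) (Fin 2) ℂ :=
  Matrix.of fun i j => ![a i, b i] j

noncomputable def pinvFC {n m : ℕ} (V : Matrix (Fin n) (Fin m) ℂ) : Matrix (Fin m) (Fin n) ℂ :=
  (Vᴴ * V)⁻¹ * Vᴴ

lemma rank_add_two_le {ι : Type*} [Fintype ι] [DecidableEq ι]
    (M : Matrix ι ι ℂ) (u₁ u₂ : ι → ℂ)
    (h1 : M *ᵥ u₁ = 0) (h2 : M *ᵥ u₂ = 0)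
    (hind : LinearIndependent ℂ ![u₁, u₂]) :
    M.rank + 2 ≤ Fintype.card ι := by
  have h1' : u₁ ∈ LinearMap.ker M.mulVecLin := by
    simpa [LinearMap.mem_ker] using h1
  have h2' : u₂ ∈ LinearMap.ker M.mulVecLin := by
    simpa [LinearMap.mem_ker] using h2
  set w : Fin 2 → LinearMap.ker M.mulVecLin := ![⟨u₁, h1'⟩, ⟨u₂, h2'⟩] with hw
  have hcomp : ((LinearMap.ker M.mulVecLin).subtype ∘ w) = ![u₁, u₂] := by
    funext i
    fin_cases i <;> rfl
  have hwind : LinearIndependent ℂ w :=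
    LinearIndependent.of_comp (LinearMap.ker M.mulVecLin).subtype (hcomp ▸ hind)
  have hker : 2 ≤ Module.finrank ℂ (LinearMap.ker M.mulVecLin) := by
    simpa using hwind.fintype_card_le_finrank
  have hrn := LinearMap.finrank_range_add_finrank_ker M.mulVecLin
  rw [Module.finrank_fintype_fun_eq_card] at hrn
  have hrank : M.rank = Module.finrank ℂ (LinearMap.range M.mulVecLin) := rfl
  omega

open scoped ComplexOrder in
lemma sorted_eig_zero {N : ℕ} (M : Matrix (Fin N) (Fin N) ℂ) (hrank : M.rank + 2 ≤ N)
    (k : Fin N) (hk : (k : ℕ) ≤ 1) :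
    ((Matrix.isHermitian_conjTranspose_mul_self M).eigenvalues ∘
      Tuple.sort (Matrix.isHermitian_conjTranspose_mul_self M).eigenvalues) k = 0 := by
  have hN : 2 ≤ N := by omega
  set ev := (Matrix.isHermitian_conjTranspose_mul_self M).eigenvalues with hev
  have hmono : Monotone (ev ∘ Tuple.sort ev) := Tuple.monotone_sort ev
  have hnn : ∀ i, 0 ≤ ev i := fun i =>
    Matrix.eigenvalues_conjTranspose_mul_self_nonneg M i
  have hcard : Fintype.card {i // ev i ≠ 0} = M.rank := by
    rw [hev, ← (Matrix.isHermitian_conjTranspose_mul_self M).rank_eq_card_non_zero_eigs,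
      Matrix.rank_conjTranspose_mul_self]
  set z : Fin N := ⟨0, by omega⟩ with hz
  set o : Fin N := ⟨1, by omega⟩ with ho
  have hone : (ev ∘ Tuple.sort ev) o = 0 := by
    by_contra hne
    have hpos : 0 < (ev ∘ Tuple.sort ev) o := lt_of_le_of_ne (hnn _) (Ne.symm hne)
    have hinj : ∀ i : Fin N, i ≠ z → ev (Tuple.sort ev i) ≠ 0 := by
      intro i hi
      have hle : o ≤ i := by
        rw [Fin.le_def]
        have : (i : ℕ) ≠ 0 := fun hcc => hi (Fin.ext (by simpa [hz] using hcc))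
        simp only [ho]
        omega
      exact ne_of_gt (lt_of_lt_of_le hpos (hmono hle))
    have hle2 : Fintype.card {i : Fin N // i ≠ z} ≤
        Fintype.card {i // ev i ≠ 0} := by
      apply Fintype.card_le_of_injective
        (fun p => ⟨Tuple.sort ev p.1, hinj p.1 p.2⟩)
      intro a b hab
      exact Subtype.ext ((Tuple.sort ev).injective (congrArg Subtype.val hab))
    have hcard2 : Fintype.card {i : Fin N // i ≠ z} = N - 1 := by
      simp [Fintype.card_subtype_compl]
    omega
  have hk0 : (ev ∘ Tuple.sort ev) k ≤ (ev ∘ Tuple.sort ev) o :=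
    hmono (by rw [Fin.le_def]; simp only [ho]; omega)
  exact le_antisymm (hone ▸ hk0) (hnn _)

theorem stmt1 {n m : ℕ} (hn : 0 < n) (Q : Fin (m + 1) → Matrix (Fin n) (Fin n) ℂ)
    (μ₁ μ₂ : ℂ) (hμ : μ₁ ≠ μ₂)
    (h1 : (evalMP Q μ₁).det = 0) (h2 : (evalMP Q μ₂).det = 0) (γ : ℂ) :
    (Fblk (evalMP Q μ₁) (evalMP Q μ₂)
        ((μ₁ - μ₂)⁻¹ • (evalMP Q μ₁ - evalMP Q μ₂)) γ).rank ≤ n + n - 2 ∧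
    sval (Fblk (evalMP Q μ₁) (evalMP Q μ₂)
        ((μ₁ - μ₂)⁻¹ • (evalMP Q μ₁ - evalMP Q μ₂)) γ) ⟨n + n - 2, by omega⟩ = 0 ∧
    sval (Fblk (evalMP Q μ₁) (evalMP Q μ₂)
        ((μ₁ - μ₂)⁻¹ • (evalMP Q μ₁ - evalMP Q μ₂)) γ) ⟨n + n - 1, by omega⟩ = 0 := by
  set A := evalMP Q μ₁ with hA
  set B := evalMP Q μ₂ with hB
  obtain ⟨x, hx0, hxA⟩ := (Matrix.exists_mulVec_eq_zero_iff).2 h1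
  obtain ⟨y, hy0, hyB⟩ := (Matrix.exists_mulVec_eq_zero_iff).2 h2
  set c : ℂ := γ * (μ₁ - μ₂)⁻¹ with hc
  set G : Matrix (Fin n ⊕ Fin n) (Fin n ⊕ Fin n) ℂ :=
    Matrix.fromBlocks A 0 (γ • ((μ₁ - μ₂)⁻¹ • (A - B))) B with hG
  set u₁ : Fin n ⊕ Fin n → ℂ := Sum.elim x (c • x) with hu₁
  set u₂ : Fin n ⊕ Fin n → ℂ := Sum.elim 0 y with hu₂
  have hGu₁ : G *ᵥ u₁ = 0 := by
    rw [hG, hu₁, Matrix.fromBlocks_mulVec]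
    simp only [Sum.elim_comp_inl, Sum.elim_comp_inr]
    have e1 : A *ᵥ x + (0 : Matrix (Fin n) (Fin n) ℂ) *ᵥ (c • x) = 0 := by
      simp [hxA]
    have e2 : (γ • ((μ₁ - μ₂)⁻¹ • (A - B))) *ᵥ x + B *ᵥ (c • x) = 0 := by
      rw [Matrix.smul_mulVec, Matrix.smul_mulVec, Matrix.sub_mulVec, hxA,
        Matrix.mulVec_smul]
      rw [smul_smul, ← hc]
      simp
    rw [e1, e2, Sum.elim_zero_zero]
  have hGu₂ : G *ᵥ u₂ = 0 := by
    rw [hG, hu₂, Matrix.fromBlocks_mulVec]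
    simp only [Sum.elim_comp_inl, Sum.elim_comp_inr]
    simp [hyB]
  have hind : LinearIndependent ℂ ![u₁, u₂] := by
    rw [LinearIndependent.pair_iff]
    intro s t hst
    have hs : s = 0 := by
      have hx' : s • x = 0 := by
        funext i
        have := congrFun hst (Sum.inl i)
        simpa [hu₁, hu₂] using this
      rcases smul_eq_zero.mp hx' with h | h
      · exact h
      · exact absurd h hx0
    refine ⟨hs, ?_⟩
    have hy' : t • y = 0 := by
      funext i
      have := congrFun hst (Sum.inr i)
      simpa [hu₁, hu₂, hs] using this
    rcases smul_eq_zero.mp hy' with h | h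
    · exact h
    · exact absurd h hy0
  have hrank2 : G.rank + 2 ≤ n + n := by
    have := rank_add_two_le G u₁ u₂ hGu₁ hGu₂ hind
    simpa using this
  have hFG : (Fblk A B ((μ₁ - μ₂)⁻¹ • (A - B)) γ).rank = G.rank := by
    rw [Fblk, Matrix.rank_reindex]
  have hrk : (Fblk A B ((μ₁ - μ₂)⁻¹ • (A - B)) γ).rank + 2 ≤ n + n := by
    rw [hFG]; exact hrank2
  refine ⟨by omega, ?_, ?_⟩
  · rw [sval]
    rw [sorted_eig_zero _ hrk _ (by
      rw [Fin.val_rev]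
      simp only []
      omega)]
    exact Real.sqrt_zero
  · rw [sval]
    rw [sorted_eig_zero _ hrk _ (by
      rw [Fin.val_rev]
      simp only []
      omega)]
    exact Real.sqrt_zero
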